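/- With the same sampling scheme over β-subsets of rows of A (rows normalized, selecting the row with maximal positive residual in the sample), for any y ∈ ℝ^n one has E[‖a_{i*} (a_{i*}^T y − b_{i*})^+‖²] ≤ (β/m) ‖(Ay − b)^+‖². -/

import Mathlib

noncomputable section
open Matrix Finset

/-- Positive residual `(aᵢᵀy − bᵢ)⁺` of row `i` of the system `Ax ≤ b` at `y`. -/
def res {m n : ℕ} (A : Matrix (Fin m) (Fin n) ℝ) (b : Fin m → ℝ) (y : Fin n → ℝ)
    (i : Fin m) : ℝ :=
  max (A.mulVec y i - b i) 0

/-- For `A` with unit-norm rows, under the β-subset sampling scheme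
selecting the row with maximal positive residual (encoded by a sorting bijection `ord`,
so the expectation of `q(i*)` is `(1/C(m,β)) Σ_{k=0}^{m−β} C(β−1+k, β−1) q(i_k)` with
`i_k` the index of the `(β+k)`-th smallest entry of `(Ay − b)⁺`), one has
`E[‖a_{i*}(a_{i*}ᵀy − b_{i*})⁺‖²] ≤ (β/m)‖(Ay − b)⁺‖²`. -/
theorem stmt1 {m n β : ℕ} (hβ : 1 ≤ β) (hβm : β ≤ m)
    (A : Matrix (Fin m) (Fin n) ℝ) (b : Fin m → ℝ) (y : Fin n → ℝ)
    (hrows : ∀ i, ∑ j, A i j ^ 2 = 1)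
    (ord : Fin m ≃ Fin m)
    (hord : ∀ j j' : Fin m, j ≤ j' → res A b y (ord j) ≤ res A b y (ord j')) :
    (1 / (m.choose β : ℝ)) *
      ∑ k : Fin (m - β + 1), ((β - 1 + k.val).choose (β - 1) : ℝ) *
        (∑ t, (res A b y (ord ⟨β - 1 + k.val, by have := k.isLt; omega⟩) *
            A (ord ⟨β - 1 + k.val, by have := k.isLt; omega⟩) t) ^ 2)
    ≤ ((β : ℝ) / (m : ℝ)) * ∑ i, res A b y i ^ 2 := by
  have hm : 0 < m := lt_of_lt_of_le hβ hβm
  have hCpos : 0 < m.choose β := Nat.choose_pos hβm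
  have hC : (0:ℝ) < (m.choose β : ℝ) := by exact_mod_cast hCpos
  have hinner : ∀ i : Fin m, ∑ t, (res A b y i * A i t)^2 = (res A b y i)^2 := by
    intro i
    simp only [mul_pow, ← Finset.mul_sum, hrows i, mul_one]
  simp only [hinner]
  set f : Fin m → ℝ := fun i => (res A b y i)^2 with hf
  set T : ℝ := ∑ i, f i with hT
  have hTnn : 0 ≤ T := Finset.sum_nonneg fun i _ => sq_nonneg _
  set e : Fin (m - β + 1) → Fin m := fun k => ord ⟨β - 1 + k.val, by have := k.isLt; omega⟩ with he
  have hei : Function.Injective e := by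
    intro a b hab
    have := ord.injective hab
    have h2 : β - 1 + a.val = β - 1 + b.val := congrArg Fin.val this
    exact Fin.ext (by omega)
  have hsum : ∑ k : Fin (m - β + 1), f (e k) ≤ T := by
    rw [← Finset.sum_image (f := f) (g := e) (fun a _ b _ h => hei h)]
    exact Finset.sum_le_sum_of_subset_of_nonneg (Finset.subset_univ _)
      (fun i _ _ => sq_nonneg _)
  have hstep : ∑ k : Fin (m - β + 1), ((β - 1 + k.val).choose (β - 1) : ℝ) * f (e k)
      ≤ ((m-1).choose (β-1) : ℝ) * T := by
    calc ∑ k : Fin (m - β + 1), ((β - 1 + k.val).choose (β - 1) : ℝ) * f (e k)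
        ≤ ∑ k : Fin (m - β + 1), ((m-1).choose (β-1) : ℝ) * f (e k) := by
          refine Finset.sum_le_sum fun k _ => ?_
          have hle : (β - 1 + k.val).choose (β - 1) ≤ (m-1).choose (β-1) :=
            Nat.choose_le_choose _ (by have := k.isLt; omega)
          exact mul_le_mul_of_nonneg_right (by exact_mod_cast hle) (sq_nonneg _)
      _ = ((m-1).choose (β-1) : ℝ) * ∑ k, f (e k) := by rw [Finset.mul_sum]
      _ ≤ ((m-1).choose (β-1) : ℝ) * T :=
          mul_le_mul_of_nonneg_left hsum (by positivity)
  have hid : ((m-1).choose (β-1) : ℝ) / (m.choose β : ℝ) = (β:ℝ)/(m:ℝ) := by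
    have hn : m * (m-1).choose (β-1) = m.choose β * β := by
      have := Nat.add_one_mul_choose_eq (m-1) (β-1)
      have h1 : m - 1 + 1 = m := by omega
      have h2 : β - 1 + 1 = β := by omega
      rw [h1, h2] at this
      exact this
    have hm' : (0:ℝ) < (m:ℝ) := by exact_mod_cast hm
    field_simp
    have : ((m:ℝ)) * ((m-1).choose (β-1) : ℝ) = (m.choose β : ℝ) * β := by exact_mod_cast hn
    linarith [this]
  calc (1 / (m.choose β : ℝ)) * ∑ k : Fin (m - β + 1), ((β - 1 + k.val).choose (β - 1) : ℝ) * f (e k)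
      ≤ (1 / (m.choose β : ℝ)) * (((m-1).choose (β-1) : ℝ) * T) :=
        mul_le_mul_of_nonneg_left hstep (by positivity)
    _ = (((m-1).choose (β-1) : ℝ) / (m.choose β : ℝ)) * T := by ring
    _ = ((β : ℝ) / (m : ℝ)) * T := by rw [hid]
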